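/- In the acyclic network setting, the map Φ : D → [0,∞)^J is injective. -/

import Mathlib

open scoped Classical

/-- Stations visited by class `k` strictly before station `j` along its route. -/
def priorStations {J K : ℕ} (path : Fin K → List (Fin J)) (k : Fin K) (j : Fin J) :
    Finset (Fin J) :=
  ((path k).takeWhile (fun i => i ≠ j)).toFinset

/-- The map `Φ`: the minimum over the empty set is interpreted as `+∞`
and `H k (+∞) = 0` (bounded support above). -/
noncomputable def PhiNet {J K : ℕ} (path : Fin K → List (Fin J))
    (ρ : Fin K → Fin J → ℝ) (H : Fin K → ℝ → ℝ) (y : Fin J → ℝ) : Fin J → ℝ :=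
  fun j => ∑ k ∈ Finset.univ.filter (fun k => j ∈ path k),
    ρ k j * max (H k (y j) -
      (if h : (priorStations path k j).Nonempty
        then H k ((priorStations path k j).inf' h y) else 0)) 0

/-- `π ∈ Π`: for every `m`, the station `π m` can be reached through the
stations `π 0, …, π (m-1)`, i.e. some class visits `π m` with all of its
prior stations among `π 0, …, π (m-1)`. -/
def AdmissiblePerm {J K : ℕ} (path : Fin K → List (Fin J)) (π : Equiv.Perm (Fin J)) : Prop :=
  ∀ m : Fin J, ∃ k : Fin K, π m ∈ path k ∧
    ∀ i ∈ priorStations path k (π m), ∃ m' : Fin J, m' < m ∧ π m' = i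

/-- The set `D^π` of (3.12): the coordinates are ordered along `π` and
`y (π m) ≤ max_{k ∈ K_{m-1}^π(π m)} y_k^*`. -/
def Dpi {J K : ℕ} (path : Fin K → List (Fin J)) (ystar : Fin K → ℝ)
    (π : Equiv.Perm (Fin J)) : Set (Fin J → ℝ) :=
  {y | (∀ m m' : Fin J, m ≤ m' → y (π m') ≤ y (π m)) ∧
    ∀ m : Fin J, ∃ k : Fin K,
      (π m ∈ path k ∧ ∀ i ∈ priorStations path k (π m), ∃ m' : Fin J, m' < m ∧ π m' = i) ∧
      y (π m) ≤ ystar k}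

/-- The set `D = ⋃_{π ∈ Π} D^π` of (3.13). -/
def Dset {J K : ℕ} (path : Fin K → List (Fin J)) (ystar : Fin K → ℝ) : Set (Fin J → ℝ) :=
  ⋃ π ∈ {π : Equiv.Perm (Fin J) | AdmissiblePerm path π}, Dpi path ystar π


/-- Key comparison lemma: if `y ∈ D^π`, `a` dominates all coordinates where
`y` and `z` differ, and `y` attains the value `a` at some coordinate where
they differ, then `Φ(y) < Φ(z)` at some coordinate. -/
lemma phiNet_aux {J K : ℕ} (path : Fin K → List (Fin J))
    (ρ : Fin K → Fin J → ℝ) (hρ : ∀ j k, j ∈ path k → 0 < ρ k j)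
    (H : Fin K → ℝ → ℝ) (ystar : Fin K → ℝ)
    (hanti : ∀ k, Antitone (H k))
    (hstrict : ∀ k, StrictAntiOn (H k) (Set.Iic (ystar k)))
    (hnonneg : ∀ k y, 0 ≤ H k y)
    (y z : Fin J → ℝ) (π : Equiv.Perm (Fin J)) (hy : y ∈ Dpi path ystar π)
    (a : ℝ)
    (ha : ∀ i, y i ≠ z i → y i ≤ a ∧ z i ≤ a)
    (hB : ∃ i, y i ≠ z i ∧ y i = a) :
    ∃ j, PhiNet path ρ H y j < PhiNet path ρ H z j := by
  classical
  set B : Finset (Fin J) := Finset.univ.filter (fun i => y i ≠ z i ∧ y i = a) with hBdef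
  obtain ⟨i0, hi0⟩ := hB
  have hBne : (Finset.univ.filter (fun m : Fin J => π m ∈ B)).Nonempty := by
    refine ⟨π.symm i0, Finset.mem_filter.mpr ⟨Finset.mem_univ _, ?_⟩⟩
    rw [Equiv.apply_symm_apply]
    exact Finset.mem_filter.mpr ⟨Finset.mem_univ _, hi0⟩
  obtain ⟨m, hmmem, hmin⟩ :=
    Finset.exists_min_image (Finset.univ.filter (fun m : Fin J => π m ∈ B)) id hBne
  have hmB : π m ∈ B := (Finset.mem_filter.mp hmmem).2
  have hmB' := Finset.mem_filter.mp hmB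
  have hyj : y (π m) = a := hmB'.2.2
  have hnej : y (π m) ≠ z (π m) := hmB'.2.1
  have hzj : z (π m) < a := by
    refine lt_of_le_of_ne (ha _ hnej).2 ?_
    intro h; exact hnej (hyj.trans h.symm)
  have hzylt : z (π m) < y (π m) := hyj ▸ hzj
  have hprev : ∀ m' : Fin J, m' < m → z (π m') = y (π m') ∧ a ≤ y (π m') := by
    intro m' hm'
    have h1 : y (π m) ≤ y (π m') := hy.1 m' m hm'.le
    have h2 : a ≤ y (π m') := hyj ▸ h1
    refine ⟨?_, h2⟩
    by_contra hne'
    have hne'' : y (π m') ≠ z (π m') := fun h => hne' h.symm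
    have hle : y (π m') ≤ a := (ha _ hne'').1
    have heq : y (π m') = a := le_antisymm hle h2
    have : π m' ∈ B := Finset.mem_filter.mpr ⟨Finset.mem_univ _, hne'', heq⟩
    have : m ≤ m' := hmin m' (Finset.mem_filter.mpr ⟨Finset.mem_univ _, this⟩)
    exact absurd hm' (not_lt.mpr this)
  obtain ⟨k, ⟨hkmem, hkprior⟩, hkstar⟩ := hy.2 m
  refine ⟨π m, ?_⟩
  unfold PhiNet
  refine Finset.sum_lt_sum ?_ ⟨k, Finset.mem_filter.mpr ⟨Finset.mem_univ _, hkmem⟩, ?_⟩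
  · intro k' hk'
    have hρ' : 0 < ρ k' (π m) := hρ _ _ (Finset.mem_filter.mp hk').2
    refine mul_le_mul_of_nonneg_left ?_ hρ'.le
    by_cases h : (priorStations path k' (π m)).Nonempty
    · rw [dif_pos h, dif_pos h]
      by_cases hw : (priorStations path k' (π m)).inf' h y ≤ y (π m)
      · have hle0 : H k' (y (π m)) - H k' ((priorStations path k' (π m)).inf' h y) ≤ 0 :=
          sub_nonpos.mpr (hanti k' hw)
        rw [max_eq_right hle0]
        exact le_max_right _ _
      · push_neg at hw
        have hzeq : ∀ i ∈ priorStations path k' (π m), z i = y i := by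
          intro i hi
          have hyi : y (π m) < y i :=
            lt_of_lt_of_le hw (Finset.inf'_le _ hi)
          by_contra hne'
          have : y i ≤ a := (ha i (fun h => hne' h.symm)).1
          exact absurd (lt_of_lt_of_le (hyj ▸ hyi) this) (lt_irrefl _)
        have heq : (priorStations path k' (π m)).inf' h z
            = (priorStations path k' (π m)).inf' h y :=
          Finset.inf'_congr h rfl hzeq
        rw [heq]
        exact max_le_max (sub_le_sub_right (hanti k' hzylt.le) _) le_rfl
    · rw [dif_neg h, dif_neg h]
      exact max_le_max (sub_le_sub_right (hanti k' hzylt.le) _) le_rfl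
  · have hzstar : z (π m) ≤ ystar k := le_trans hzylt.le hkstar
    have hH : H k (y (π m)) < H k (z (π m)) :=
      hstrict k (Set.mem_Iic.mpr hzstar) (Set.mem_Iic.mpr hkstar) hzylt
    refine mul_lt_mul_of_pos_left ?_ (hρ _ _ hkmem)
    by_cases h : (priorStations path k (π m)).Nonempty
    · have hvals : ∀ i ∈ priorStations path k (π m), z i = y i ∧ a ≤ y i := by
        intro i hi
        obtain ⟨m', hm', rfl⟩ := hkprior i hi
        exact hprev m' hm'
      have heq : (priorStations path k (π m)).inf' h z
          = (priorStations path k (π m)).inf' h y :=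
        Finset.inf'_congr h rfl (fun i hi => (hvals i hi).1)
      have hwa : y (π m) ≤ (priorStations path k (π m)).inf' h y :=
        Finset.le_inf' h _ (fun i hi => hyj ▸ (hvals i hi).2)
      have hc : H k ((priorStations path k (π m)).inf' h y) ≤ H k (y (π m)) :=
        hanti k hwa
      rw [dif_pos h, dif_pos h, heq]
      have h1 : (0:ℝ) ≤ H k (y (π m)) - H k ((priorStations path k (π m)).inf' h y) :=
        sub_nonneg.mpr hc
      have h2 : (0:ℝ) ≤ H k (z (π m)) - H k ((priorStations path k (π m)).inf' h y) :=
        le_trans h1 (sub_le_sub_right hH.le _)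
      rw [max_eq_left h1, max_eq_left h2]
      exact sub_lt_sub_right hH _
    · rw [dif_neg h, dif_neg h, sub_zero, sub_zero,
        max_eq_left (hnonneg _ _), max_eq_left (hnonneg _ _)]
      exact hH

theorem stmt12
    {J K : ℕ} (hJ : 0 < J)
    (path : Fin K → List (Fin J))
    (hnodup : ∀ k, (path k).Nodup) (hne : ∀ k, path k ≠ [])
    (hcover : ∀ j : Fin J, ∃ k, j ∈ path k)
    (hconn : ∀ j j' : Fin J,
      Relation.ReflTransGen (fun a b => ∃ k, a ∈ path k ∧ b ∈ path k) j j')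
    (ρ : Fin K → Fin J → ℝ) (hρ : ∀ j k, j ∈ path k → 0 < ρ k j)
    (hρsum : ∀ j : Fin J, ∑ k ∈ Finset.univ.filter (fun k => j ∈ path k), ρ k j = 1)
    (H : Fin K → ℝ → ℝ) (ystar : Fin K → ℝ)
    (hcont : ∀ k, Continuous (H k))
    (hanti : ∀ k, Antitone (H k))
    (hstrict : ∀ k, StrictAntiOn (H k) (Set.Iic (ystar k)))
    (hzero : ∀ k, ∀ y, ystar k ≤ y → H k y = 0)
    (hnonneg : ∀ k y, 0 ≤ H k y)
    (hinf : ∀ k, Filter.Tendsto (H k) Filter.atBot Filter.atTop)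
    : Set.InjOn (PhiNet path ρ H) (Dset path ystar) := by
  intro y hy z hz hPhi
  classical
  by_contra hneq
  simp only [Dset, Set.mem_iUnion, Set.mem_setOf_eq] at hy hz
  obtain ⟨π, -, hyD⟩ := hy
  obtain ⟨σ, -, hzD⟩ := hz
  have hS : (Finset.univ.filter (fun i : Fin J => y i ≠ z i)).Nonempty := by
    obtain ⟨i, hi⟩ := Function.ne_iff.mp hneq
    exact ⟨i, Finset.mem_filter.mpr ⟨Finset.mem_univ _, hi⟩⟩
  set S := Finset.univ.filter (fun i : Fin J => y i ≠ z i) with hSdef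
  set a := S.sup' hS (fun i => max (y i) (z i)) with hadef
  have ha : ∀ i, y i ≠ z i → y i ≤ a ∧ z i ≤ a := by
    intro i hi
    have hiS : i ∈ S := Finset.mem_filter.mpr ⟨Finset.mem_univ _, hi⟩
    have := Finset.le_sup' (fun i => max (y i) (z i)) hiS
    exact ⟨le_trans (le_max_left _ _) this, le_trans (le_max_right _ _) this⟩
  have ha' : ∀ i, z i ≠ y i → z i ≤ a ∧ y i ≤ a := by
    intro i hi
    exact (ha i (Ne.symm hi)).symm
  obtain ⟨i0, hi0S, hi0⟩ := Finset.exists_mem_eq_sup' hS (fun i => max (y i) (z i))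
  have hi0ne : y i0 ≠ z i0 := (Finset.mem_filter.mp hi0S).2
  rcases max_choice (y i0) (z i0) with h | h
  · obtain ⟨j, hj⟩ := phiNet_aux path ρ hρ H ystar hanti hstrict hnonneg
      y z π hyD a ha ⟨i0, hi0ne, (hi0.trans h).symm⟩
    rw [hPhi] at hj
    exact absurd hj (lt_irrefl _)
  · obtain ⟨j, hj⟩ := phiNet_aux path ρ hρ H ystar hanti hstrict hnonneg
      z y σ hzD a ha' ⟨i0, Ne.symm hi0ne, (hi0.trans h).symm⟩
    rw [hPhi] at hj
    exact absurd hj (lt_irrefl _)
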